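/- Let k ≥ 1 be an integer and let H be a cumulative distribution function on ℝ. Define F : ℝ → ℝ by F(x) = 1 / (1 + k·(−log H(x)))^(1/k) when H(x) > 0 and F(x) = 0 when H(x) = 0. Then F is a cumulative distribution function, and for every p ∈ (0,1), setting a = 1/p, there exists a cumulative distribution function G on ℝ such that F(x) = G(x) / (a − (a−1)·G(x)^k)^(1/k) for all x ∈ ℝ; that is, every gamma-max-infinitely-divisible distribution function is a Harris(a,k)-maximum for every p ∈ (0,1). -/

import Mathlib

open Filter

/-- A cumulative distribution function on ℝ: nondecreasing, right-continuous,
with limit 0 at -∞ and limit 1 at +∞. -/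
def IsCDF (F : ℝ → ℝ) : Prop :=
  Monotone F ∧ (∀ x : ℝ, ContinuousWithinAt F (Set.Ici x) x) ∧
    Tendsto F atBot (nhds 0) ∧ Tendsto F atTop (nhds 1)

lemma IsCDF.nonneg' {H : ℝ → ℝ} (hH : IsCDF H) (x : ℝ) : 0 ≤ H x :=
  le_of_tendsto hH.2.2.1 (eventually_atBot.2 ⟨x, fun _ hy => hH.1 hy⟩)

lemma IsCDF.le_one' {H : ℝ → ℝ} (hH : IsCDF H) (x : ℝ) : H x ≤ 1 :=
  ge_of_tendsto hH.2.2.2 (eventually_atTop.2 ⟨x, fun _ hy => hH.1 hy⟩)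

/-- Auxiliary: the gamma-transform of a cdf is a cdf. -/
lemma isCDF_gamma (k : ℕ) (hk : 1 ≤ k) (H : ℝ → ℝ) (hH : IsCDF H) (F : ℝ → ℝ)
    (hF : ∀ x : ℝ,
      (0 < H x → F x = 1 / (1 + (k : ℝ) * (-Real.log (H x))) ^ ((1 : ℝ) / (k : ℝ))) ∧
      (H x = 0 → F x = 0)) : IsCDF F := by
  have h0 := hH.nonneg'
  have h1 := hH.le_one'
  obtain ⟨hmono, hrc, hbot, htop⟩ := hH
  have hKpos : (0 : ℝ) < (k : ℝ) := by
    have : 0 < k := by omega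
    exact_mod_cast this
  have hlog : ∀ x, 0 ≤ -Real.log (H x) := fun x =>
    neg_nonneg.2 (Real.log_nonpos (h0 x) (h1 x))
  have hbase : ∀ x, (0 : ℝ) < 1 + (k : ℝ) * (-Real.log (H x)) := fun x =>
    add_pos_of_pos_of_nonneg one_pos (mul_nonneg hKpos.le (hlog x))
  set g : ℝ → ℝ := fun h => if h ≤ 0 then 0 else
    1 / (1 + (k : ℝ) * (-Real.log h)) ^ ((1 : ℝ) / (k : ℝ)) with hg
  have hFg : ∀ x, F x = g (H x) := by
    intro x
    rcases (h0 x).eq_or_lt with h | h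
    · rw [(hF x).2 h.symm, hg, ← h]
      simp
    · rw [(hF x).1 h, hg]
      simp only
      rw [if_neg (not_le.2 h)]
  have hg0 : g 0 = 0 := by simp [hg]
  have hg1 : g 1 = 1 := by
    rw [hg]
    simp [Real.log_one]
  have hgcont : ContinuousOn g (Set.Icc 0 1) := by
    intro h hh
    rcases hh.1.eq_or_lt with h0' | h0'
    · -- continuity at 0 within Icc 0 1
      have h0eq : h = 0 := h0'.symm
      subst h0eq
      have key : Tendsto g (nhdsWithin 0 (Set.Ici 0)) (nhds 0) := by
        have hset : Set.Ici (0 : ℝ) = {0} ∪ Set.Ioi 0 := by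
          ext t
          simp only [Set.mem_Ici, Set.mem_union, Set.mem_singleton_iff, Set.mem_Ioi]
          constructor
          · intro ht; rcases ht.eq_or_lt with h' | h' <;> [exact Or.inl h'.symm; exact Or.inr h']
          · rintro (rfl | ht) <;> [exact le_rfl; exact ht.le]
        rw [hset, nhdsWithin_union, tendsto_sup]
        constructor
        · rw [nhdsWithin_singleton]
          have := tendsto_pure_nhds g 0
          rwa [hg0] at this
        · have lneg : Tendsto (fun t : ℝ => -Real.log t) (nhdsWithin 0 (Set.Ioi 0)) atTop :=
            tendsto_neg_atBot_atTop.comp Real.tendsto_log_nhdsGT_zero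
          have l2 : Tendsto (fun t : ℝ => 1 + (k : ℝ) * (-Real.log t))
              (nhdsWithin 0 (Set.Ioi 0)) atTop :=
            tendsto_atTop_add_const_left _ 1 (lneg.const_mul_atTop hKpos)
          have l3 : Tendsto (fun s : ℝ => s ^ ((1 : ℝ) / (k : ℝ))) atTop atTop :=
            tendsto_rpow_atTop (by positivity)
          have l4 : Tendsto
              (fun t : ℝ => ((1 + (k : ℝ) * (-Real.log t)) ^ ((1 : ℝ) / (k : ℝ)))⁻¹)
              (nhdsWithin 0 (Set.Ioi 0)) (nhds 0) :=
            tendsto_inv_atTop_zero.comp (l3.comp l2)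
          refine Tendsto.congr' ?_ l4
          filter_upwards [self_mem_nhdsWithin] with t ht
          rw [hg]
          simp only
          rw [if_neg (not_le.2 ht)]
          exact (one_div _).symm
      have : Tendsto g (nhdsWithin 0 (Set.Icc 0 1)) (nhds (g 0)) := by
        rw [hg0]
        exact key.mono_left (nhdsWithin_mono _ Set.Icc_subset_Ici_self)
      exact this
    · -- continuity at h > 0
      have hbp : (0 : ℝ) < 1 + (k : ℝ) * (-Real.log h) :=
        add_pos_of_pos_of_nonneg one_pos
          (mul_nonneg hKpos.le (neg_nonneg.2 (Real.log_nonpos h0'.le hh.2)))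
      have hc : ContinuousAt
          (fun t : ℝ => 1 / (1 + (k : ℝ) * (-Real.log t)) ^ ((1 : ℝ) / (k : ℝ))) h := by
        have hlogc : ContinuousAt Real.log h := Real.continuousAt_log (ne_of_gt h0')
        have hbc : ContinuousAt (fun t : ℝ => 1 + (k : ℝ) * (-Real.log t)) h :=
          continuousAt_const.add (continuousAt_const.mul hlogc.neg)
        exact continuousAt_const.div (hbc.rpow_const (Or.inl (ne_of_gt hbp)))
          (ne_of_gt (Real.rpow_pos_of_pos hbp _))
      have heq : (fun t : ℝ => 1 / (1 + (k : ℝ) * (-Real.log t)) ^ ((1 : ℝ) / (k : ℝ)))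
          =ᶠ[nhds h] g := by
        filter_upwards [isOpen_Ioi.mem_nhds h0'] with t ht
        rw [hg]
        simp only
        rw [if_neg (not_le.2 ht)]
      exact (hc.congr heq).continuousWithinAt
  have hFnonneg : ∀ x, 0 ≤ F x := by
    intro x
    rcases (h0 x).eq_or_lt with h | h
    · rw [(hF x).2 h.symm]
    · rw [(hF x).1 h]
      exact le_of_lt (div_pos one_pos (Real.rpow_pos_of_pos (hbase x) _))
  have hFmono : Monotone F := by
    intro x y hxy
    rcases (h0 x).eq_or_lt with h | h
    · rw [(hF x).2 h.symm]; exact hFnonneg y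
    · have hy : 0 < H y := lt_of_lt_of_le h (hmono hxy)
      rw [(hF x).1 h, (hF y).1 hy]
      have hle : Real.log (H x) ≤ Real.log (H y) := Real.log_le_log h (hmono hxy)
      apply one_div_le_one_div_of_le (Real.rpow_pos_of_pos (hbase y) _)
      have hmul := mul_le_mul_of_nonneg_left (neg_le_neg hle) hKpos.le
      exact Real.rpow_le_rpow (hbase y).le (by linarith) (by positivity)
  have hrcF : ∀ x, ContinuousWithinAt F (Set.Ici x) x := by
    intro x
    have := (hgcont (H x) ⟨h0 x, h1 x⟩).comp (hrc x) (fun y _ => ⟨h0 y, h1 y⟩)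
    exact this.congr (fun y _ => hFg y) (hFg x)
  have hbotF : Tendsto F atBot (nhds 0) := by
    have hH' : Tendsto H atBot (nhdsWithin 0 (Set.Icc 0 1)) :=
      tendsto_nhdsWithin_iff.2 ⟨hbot, Eventually.of_forall fun y => ⟨h0 y, h1 y⟩⟩
    have h2 : Tendsto (g ∘ H) atBot (nhds (g 0)) :=
      Filter.Tendsto.comp (hgcont 0 ⟨le_rfl, zero_le_one⟩) hH'
    rw [hg0] at h2
    exact h2.congr fun y => (hFg y).symm
  have htopF : Tendsto F atTop (nhds 1) := by
    have hH' : Tendsto H atTop (nhdsWithin 1 (Set.Icc 0 1)) :=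
      tendsto_nhdsWithin_iff.2 ⟨htop, Eventually.of_forall fun y => ⟨h0 y, h1 y⟩⟩
    have h2 : Tendsto (g ∘ H) atTop (nhds (g 1)) :=
      Filter.Tendsto.comp (hgcont 1 ⟨zero_le_one, le_rfl⟩) hH'
    rw [hg1] at h2
    exact h2.congr fun y => (hFg y).symm
  exact ⟨hFmono, hrcF, hbotF, htopF⟩

/-- Remark 4.1: every gamma-max-infinitely-divisible distribution function
`F = 1/(1 + k(-log H))^(1/k)`, `H` a cdf, is itself a cdf and is a Harris(1/p, k)-maximum
for every `p ∈ (0,1)`. -/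
theorem gamma_max_ID_is_harris_maximum (k : ℕ) (hk : 1 ≤ k)
    (H : ℝ → ℝ) (hH : IsCDF H) (F : ℝ → ℝ)
    (hF : ∀ x : ℝ,
      (0 < H x → F x = 1 / (1 + (k : ℝ) * (-Real.log (H x))) ^ ((1 : ℝ) / (k : ℝ))) ∧
      (H x = 0 → F x = 0)) :
    IsCDF F ∧
    ∀ p ∈ Set.Ioo (0 : ℝ) 1, ∃ G : ℝ → ℝ, IsCDF G ∧
      ∀ x : ℝ, F x = G x / ((1 / p) - ((1 / p) - 1) * G x ^ k) ^ ((1 : ℝ) / (k : ℝ)) := by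
  refine ⟨isCDF_gamma k hk H hH F hF, ?_⟩
  rintro p ⟨hp0, hp1⟩
  have h0 := hH.nonneg'
  have h1 := hH.le_one'
  have hKpos : (0 : ℝ) < (k : ℝ) := by
    have : 0 < k := by omega
    exact_mod_cast this
  classical
  set H' : ℝ → ℝ := fun x => H x ^ p with hH'def
  have hH'cdf : IsCDF H' := by
    obtain ⟨hmono, hrc, hbot, htop⟩ := hH
    have hc : Continuous fun h : ℝ => h ^ p :=
      continuous_iff_continuousAt.2 fun x => Real.continuousAt_rpow_const x p (Or.inr hp0.le)
    refine ⟨fun x y hxy => Real.rpow_le_rpow (h0 x) (hmono hxy) hp0.le,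
      fun x => hc.continuousAt.comp_continuousWithinAt (hrc x), ?_, ?_⟩
    · have := (hc.tendsto 0).comp hbot
      simpa [hH'def, Function.comp_def, Real.zero_rpow (ne_of_gt hp0)] using this
    · have := (hc.tendsto 1).comp htop
      simpa [hH'def, Function.comp_def, Real.one_rpow] using this
  set G : ℝ → ℝ := fun x => if H x = 0 then 0 else
      1 / (1 + (k : ℝ) * (-Real.log (H x ^ p))) ^ ((1 : ℝ) / (k : ℝ)) with hGdef
  have hG : ∀ x : ℝ,
      (0 < H' x → G x = 1 / (1 + (k : ℝ) * (-Real.log (H' x))) ^ ((1 : ℝ) / (k : ℝ))) ∧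
      (H' x = 0 → G x = 0) := by
    intro x
    constructor
    · intro hx
      have hne : H x ≠ 0 := by
        intro h
        rw [hH'def] at hx
        simp only [h, Real.zero_rpow (ne_of_gt hp0)] at hx
        exact lt_irrefl 0 hx
      rw [hGdef, hH'def]
      simp only
      rw [if_neg hne]
    · intro hx
      have : H x = 0 := by
        rw [hH'def] at hx
        exact (Real.rpow_eq_zero (h0 x) (ne_of_gt hp0)).1 hx
      rw [hGdef]
      simp only
      rw [if_pos this]
  refine ⟨G, isCDF_gamma k hk H' hH'cdf G hG, ?_⟩
  intro x
  rcases (h0 x).eq_or_lt with hx | hx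
  · rw [(hF x).2 hx.symm]
    have hGx : G x = 0 := by rw [hGdef]; simp only; rw [if_pos hx.symm]
    simp [hGx]
  · have hLnn : 0 ≤ -Real.log (H x) := neg_nonneg.2 (Real.log_nonpos (h0 x) (h1 x))
    set L : ℝ := -Real.log (H x) with hL
    set A : ℝ := 1 + (k : ℝ) * L with hA
    set B : ℝ := 1 + (k : ℝ) * (p * L) with hB
    have hApos : 0 < A := add_pos_of_pos_of_nonneg one_pos (mul_nonneg hKpos.le hLnn)
    have hBpos : 0 < B :=
      add_pos_of_pos_of_nonneg one_pos (mul_nonneg hKpos.le (mul_nonneg hp0.le hLnn))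
    have hFx : F x = 1 / A ^ ((1 : ℝ) / (k : ℝ)) := (hF x).1 hx
    have hGx : G x = 1 / B ^ ((1 : ℝ) / (k : ℝ)) := by
      rw [hGdef]
      simp only
      rw [if_neg (ne_of_gt hx), Real.log_rpow hx]
      have e : 1 + (k : ℝ) * (-(p * Real.log (H x))) = B := by rw [hB, hL]; ring
      rw [e]
    have hBr : (B ^ ((1 : ℝ) / (k : ℝ))) ^ k = B := by
      rw [← Real.rpow_natCast (B ^ ((1 : ℝ) / (k : ℝ))) k, ← Real.rpow_mul hBpos.le]
      have e : (1 : ℝ) / (k : ℝ) * (k : ℝ) = 1 := by field_simp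
      rw [e, Real.rpow_one]
    have hGk : G x ^ k = 1 / B := by
      rw [hGx, div_pow, one_pow, hBr]
    have hBrpos : 0 < B ^ ((1 : ℝ) / (k : ℝ)) := Real.rpow_pos_of_pos hBpos _
    have hArpos : 0 < A ^ ((1 : ℝ) / (k : ℝ)) := Real.rpow_pos_of_pos hApos _
    have hfrac : (1 / p) - ((1 / p) - 1) * G x ^ k = A / B := by
      rw [hGk, hB] at *
      rw [hA]
      field_simp
      ring
    have hA' := hArpos.ne'
    have hB' := hBrpos.ne'
    rw [hFx, hfrac, hGx, Real.div_rpow hApos.le hBpos.le]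
    field_simp
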